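/- Let T be an inverse semigroup and A a T-module with structure (θ, η). For n ≥ 1, an n-cochain c ∈ Cⁿ(T¹, A¹) is order-preserving if and only if for all x₁, …, xₙ ∈ T, all 1 ≤ i ≤ n and all e ∈ E(T) one has c(x₁, …, x_{i−1}, e·x_i, x_{i+1}, …, xₙ) = θ(r(x₁ ⋯ x_{i−1} e)) · c(x₁, …, xₙ), where r(s) = s s⁻¹. -/
import Mathlib


/-- An inverse semigroup: every element `s` has a (unique) inverse `s⁻¹`
with `s * s⁻¹ * s = s` and `s⁻¹ * s * s⁻¹ = s⁻¹`. -/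
class InverseSemigroup (S : Type*) extends Semigroup S, Inv S where
  mul_inv_mul : ∀ s : S, s * s⁻¹ * s = s
  inv_mul_inv : ∀ s : S, s⁻¹ * s * s⁻¹ = s⁻¹
  inv_unique : ∀ s t : S, s * t * s = s → t * s * t = t → t = s⁻¹

namespace InverseSemigroup

/-- The set of idempotents of a multiplicative structure. -/
def E (S : Type*) [Mul S] : Set S := {e | e * e = e}

/-- The natural partial order: `s ≤ t` iff `s = s * s⁻¹ * t`. -/
def nle {S : Type*} [Mul S] [Inv S] (s t : S) : Prop := s = s * s⁻¹ * t

/-- `r s = s * s⁻¹`. -/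
def r {S : Type*} [Mul S] [Inv S] (s : S) : S := s * s⁻¹

/-- A Clifford semigroup (semilattice of groups): idempotents are central. -/
def IsClifford (S : Type*) [Mul S] : Prop := ∀ e ∈ E S, ∀ s : S, e * s = s * e

end InverseSemigroup

open InverseSemigroup

/-- Product of a nonempty tuple in a semigroup. -/
def tupleProd {S : Type*} [Mul S] : ∀ {n : ℕ}, (Fin (n + 1) → S) → S
  | 0, x => x 0
  | _ + 1, x => x 0 * tupleProd (fun i => x i.succ)


section Basics
variable {S : Type*} [InverseSemigroup S]

lemma isg_inv_inv (s : S) : s⁻¹⁻¹ = s :=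
  ((InverseSemigroup.inv_unique s⁻¹ s (InverseSemigroup.inv_mul_inv s)
    (InverseSemigroup.mul_inv_mul s))).symm

lemma mem_E_iff {e : S} : e ∈ E S ↔ e * e = e := Iff.rfl

lemma idem_inv {e : S} (he : e ∈ E S) : e⁻¹ = e := by
  have h : e * e * e = e := by rw [mem_E_iff.mp he, mem_E_iff.mp he]
  exact (InverseSemigroup.inv_unique e e h h).symm

lemma r_mem (s : S) : r s ∈ E S := by
  show s * s⁻¹ * (s * s⁻¹) = s * s⁻¹
  rw [← mul_assoc, InverseSemigroup.mul_inv_mul]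

lemma inv_mul_mem (s : S) : s⁻¹ * s ∈ E S := by
  show s⁻¹ * s * (s⁻¹ * s) = s⁻¹ * s
  rw [← mul_assoc, InverseSemigroup.inv_mul_inv]

lemma idem_comm {e f : S} (he : e ∈ E S) (hf : f ∈ E S) : e * f = f * e := by
  have he' := mem_E_iff.mp he
  have hf' := mem_E_iff.mp hf
  set x := (e * f)⁻¹ with hx
  have h1 : e * f * x * (e * f) = e * f := by
    have := InverseSemigroup.mul_inv_mul (e * f); rw [← hx] at this; exact this
  have h2 : x * (e * f) * x = x := by
    have := InverseSemigroup.inv_mul_inv (e * f); rw [← hx] at this; exact this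
  have key : f * x * e = x := by
    apply InverseSemigroup.inv_unique (e * f) (f * x * e)
    · calc e * f * (f * x * e) * (e * f)
          = e * (f * f) * x * (e * e) * f := by simp only [mul_assoc]
        _ = e * f * x * (e * f) := by rw [hf', he']; simp only [mul_assoc]
        _ = e * f := h1
    · calc f * x * e * (e * f) * (f * x * e)
          = f * (x * ((e * e) * ((f * f) * x))) * e := by simp only [mul_assoc]
        _ = f * (x * (e * (f * x))) * e := by rw [he', hf']
        _ = f * (x * (e * f) * x) * e := by simp only [mul_assoc]
        _ = f * x * e := by rw [h2]
  have hxE : x * x = x := by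
    calc x * x = (f * x * e) * (f * x * e) := by rw [key]
      _ = f * (x * (e * f) * x) * e := by simp only [mul_assoc]
      _ = f * x * e := by rw [h2]
      _ = x := key
  have hefE : e * f ∈ E S := by
    have hxi : x⁻¹ = x := idem_inv hxE
    have h4 : e * f = x := by rw [← hxi, hx, isg_inv_inv]
    rw [mem_E_iff, h4]; exact hxE
  have hfeE : f * e ∈ E S := by
    set y := (f * e)⁻¹ with hy
    have h1 : f * e * y * (f * e) = f * e := by
      have := InverseSemigroup.mul_inv_mul (f * e); rw [← hy] at this; exact this
    have h2 : y * (f * e) * y = y := by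
      have := InverseSemigroup.inv_mul_inv (f * e); rw [← hy] at this; exact this
    have key : e * y * f = y := by
      apply InverseSemigroup.inv_unique (f * e) (e * y * f)
      · calc f * e * (e * y * f) * (f * e)
            = f * (e * e) * y * (f * f) * e := by simp only [mul_assoc]
          _ = f * e * y * (f * e) := by rw [he', hf']; simp only [mul_assoc]
          _ = f * e := h1
      · calc e * y * f * (f * e) * (e * y * f)
            = e * (y * ((f * f) * ((e * e) * y))) * f := by simp only [mul_assoc]
          _ = e * (y * (f * (e * y))) * f := by rw [hf', he']
          _ = e * (y * (f * e) * y) * f := by simp only [mul_assoc]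
          _ = e * y * f := by rw [h2]
    have hyE : y * y = y := by
      calc y * y = (e * y * f) * (e * y * f) := by rw [key]
        _ = e * (y * (f * e) * y) * f := by simp only [mul_assoc]
        _ = e * y * f := by rw [h2]
        _ = y := key
    have hyi : y⁻¹ = y := idem_inv hyE
    have h4 : f * e = y := by rw [← hyi, hy, isg_inv_inv]
    rw [mem_E_iff, h4]; exact hyE
  have h5 : f * e = (e * f)⁻¹ := by
    apply InverseSemigroup.inv_unique
    · calc e * f * (f * e) * (e * f) = e * (f * f) * (e * e) * f := by simp only [mul_assoc]
        _ = (e * f) * (e * f) := by rw [hf', he']; simp only [mul_assoc]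
        _ = e * f := mem_E_iff.mp hefE
    · calc f * e * (e * f) * (f * e) = f * (e * e) * (f * f) * e := by simp only [mul_assoc]
        _ = (f * e) * (f * e) := by rw [he', hf']; simp only [mul_assoc]
        _ = f * e := mem_E_iff.mp hfeE
  rw [h5]
  exact (idem_inv hefE).symm

lemma isg_mul_inv_rev (s t : S) : (s * t)⁻¹ = t⁻¹ * s⁻¹ := by
  have hc1 : t * t⁻¹ * (s⁻¹ * s) = s⁻¹ * s * (t * t⁻¹) := idem_comm (r_mem t) (inv_mul_mem s)
  have hc2 : s⁻¹ * s * (t * t⁻¹) = t * t⁻¹ * (s⁻¹ * s) := idem_comm (inv_mul_mem s) (r_mem t)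
  symm
  apply InverseSemigroup.inv_unique
  · calc s * t * (t⁻¹ * s⁻¹) * (s * t)
        = s * (t * t⁻¹ * (s⁻¹ * s)) * t := by simp only [mul_assoc]
      _ = s * (s⁻¹ * s * (t * t⁻¹)) * t := by rw [hc1]
      _ = (s * s⁻¹ * s) * (t * t⁻¹ * t) := by simp only [mul_assoc]
      _ = s * t := by rw [InverseSemigroup.mul_inv_mul, InverseSemigroup.mul_inv_mul]
  · calc t⁻¹ * s⁻¹ * (s * t) * (t⁻¹ * s⁻¹)
        = t⁻¹ * (s⁻¹ * s * (t * t⁻¹)) * s⁻¹ := by simp only [mul_assoc]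
      _ = t⁻¹ * (t * t⁻¹ * (s⁻¹ * s)) * s⁻¹ := by rw [hc2]
      _ = (t⁻¹ * t * t⁻¹) * (s⁻¹ * s * s⁻¹) := by simp only [mul_assoc]
      _ = t⁻¹ * s⁻¹ := by rw [InverseSemigroup.inv_mul_inv, InverseSemigroup.inv_mul_inv]

lemma r_conj (t u : S) : r (t * u) = t * r u * t⁻¹ := by
  show (t * u) * (t * u)⁻¹ = t * (u * u⁻¹) * t⁻¹
  rw [isg_mul_inv_rev]; simp only [mul_assoc]

lemma isg_conj_mul {f g : S} (hf : f ∈ E S) (hg : g ∈ E S) (t : S) :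
    (t * f * t⁻¹) * (t * g * t⁻¹) = t * (f * g) * t⁻¹ := by
  have hc : t⁻¹ * t * g = g * (t⁻¹ * t) := idem_comm (inv_mul_mem t) hg
  calc (t * f * t⁻¹) * (t * g * t⁻¹)
      = t * (f * (t⁻¹ * t * g)) * t⁻¹ := by simp only [mul_assoc]
    _ = t * (f * (g * (t⁻¹ * t))) * t⁻¹ := by rw [hc]
    _ = t * (f * g) * (t⁻¹ * t * t⁻¹) := by simp only [mul_assoc]
    _ = t * (f * g) * t⁻¹ := by rw [InverseSemigroup.inv_mul_inv]

lemma isg_conj_mem {f : S} (hf : f ∈ E S) (t : S) : t * f * t⁻¹ ∈ E S := by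
  rw [mem_E_iff, isg_conj_mul hf hf, mem_E_iff.mp hf]

lemma r_e {e : S} (he : e ∈ E S) : r e = e := by
  show e * e⁻¹ = e
  rw [idem_inv he, mem_E_iff.mp he]

lemma r_idem_mul {e : S} (he : e ∈ E S) (u : S) : r (e * u) = e * r u := by
  calc r (e * u) = e * r u * e⁻¹ := r_conj e u
    _ = e * (r u * e) := by rw [idem_inv he, mul_assoc]
    _ = e * (e * r u) := by rw [idem_comm (r_mem u) he]
    _ = e * r u := by rw [← mul_assoc, mem_E_iff.mp he]

lemma idem_mul_mem {e f : S} (he : e ∈ E S) (hf : f ∈ E S) : e * f ∈ E S := by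
  rw [mem_E_iff]
  calc e * f * (e * f) = e * (f * e) * f := by simp only [mul_assoc]
    _ = e * (e * f) * f := by rw [idem_comm hf he]
    _ = (e * e) * (f * f) := by simp only [mul_assoc]
    _ = e * f := by rw [mem_E_iff.mp he, mem_E_iff.mp hf]

end Basics

section Tuple
variable {S : Type*} [InverseSemigroup S]

lemma tupleProd_succ {n : ℕ} (x : Fin (n + 2) → S) :
    tupleProd x = x 0 * tupleProd (fun i => x i.succ) := rfl

lemma update_comp_succ {n : ℕ} (x : Fin (n + 2) → S) (j : Fin (n + 1)) (v : S) :
    (fun k : Fin (n + 1) => Function.update x j.succ v k.succ) =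
      Function.update (fun k : Fin (n + 1) => x k.succ) j v := by
  funext k
  by_cases hk : k = j
  · subst hk; simp
  · rw [Function.update_of_ne (fun h => hk (Fin.succ_injective _ h)),
      Function.update_of_ne hk]

lemma lemA : ∀ (n : ℕ) (x : Fin (n + 1) → S) (i : Fin (n + 1)) (e : S), e ∈ E S →
    r (tupleProd (Function.update x i (e * x i))) =
      r (((List.ofFn x).take (i : ℕ)).foldr (· * ·) e) * r (tupleProd x) := by
  intro n
  induction n with
  | zero =>
    intro x i e he
    have hi : i = 0 := Fin.fin_one_eq_zero i
    subst hi
    show r (Function.update x 0 (e * x 0) 0) = r (((List.ofFn x).take 0).foldr (· * ·) e) * r (x 0)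
    rw [Function.update_self, List.take_zero, List.foldr_nil, r_idem_mul he, r_e he]
  | succ n ih =>
    intro x i e he
    refine Fin.cases ?_ ?_ i
    · -- i = 0
      have h0 : Function.update x 0 (e * x 0) 0 = e * x 0 := Function.update_self _ _ _
      have htail : (fun k : Fin (n + 1) => Function.update x 0 (e * x 0) k.succ) =
          (fun k : Fin (n + 1) => x k.succ) := by
        funext k; exact Function.update_of_ne (Fin.succ_ne_zero k) _ _
      rw [tupleProd_succ, h0, htail]
      show r (e * x 0 * tupleProd fun k => x k.succ) =
        r (((List.ofFn x).take 0).foldr (· * ·) e) * r (tupleProd x)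
      rw [List.take_zero, List.foldr_nil, tupleProd_succ, mul_assoc, r_idem_mul he, r_e he]
    · -- i = j.succ
      intro j
      have h0 : Function.update x j.succ (e * x j.succ) 0 =
          x 0 := Function.update_of_ne (Fin.succ_ne_zero j).symm _ _
      rw [tupleProd_succ, h0, update_comp_succ]
      have hih := ih (fun k : Fin (n + 1) => x k.succ) j e he
      rw [r_conj, hih, ← isg_conj_mul (r_mem _) (r_mem _) (x 0), ← r_conj, ← r_conj,
        tupleProd_succ x]
      congr 3
      rw [Fin.val_succ]
      conv_rhs => rw [List.ofFn_succ, List.take_succ_cons, List.foldr_cons]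
end Tuple

/-- An `n`-cochain is order-preserving iff
`c(x₁,…,e xᵢ,…,xₙ) = θ(r(x₁⋯x_{i-1} e)) c(x₁,…,xₙ)` for all idempotents `e`. -/
theorem cochain_order_preserving_iff {T A : Type*} [InverseSemigroup T] [InverseSemigroup A]
    (θ : T → A) (η : T → A → A)
    (hAcomm : ∀ a b : A, a * b = b * a)
    (hθE : ∀ e ∈ E T, θ e ∈ E A)
    (hθinj : ∀ e ∈ E T, ∀ f ∈ E T, θ e = θ f → e = f)
    (hθsurj : ∀ a ∈ E A, ∃ e ∈ E T, θ e = a)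
    (hθmul : ∀ e ∈ E T, ∀ f ∈ E T, θ (e * f) = θ e * θ f)
    (hηhom : ∀ t u : T, ∀ a : A, η (t * u) a = η t (η u a))
    (hηmul : ∀ t : T, ∀ a b : A, η t (a * b) = η t a * η t b)
    (hη1 : ∀ e ∈ E T, ∀ a : A, η e a = θ e * a)
    (hη2 : ∀ t : T, ∀ e ∈ E T, η t (θ e) = θ (t * e * t⁻¹))
    (m : ℕ) (c : (Fin (m + 1) → T) → A)
    (hc : ∀ x : Fin (m + 1) → T, c x * (c x)⁻¹ = θ (r (tupleProd x))) :
    (∀ x y : Fin (m + 1) → T, (∀ i, nle (x i) (y i)) → nle (c x) (c y)) ↔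
      (∀ x : Fin (m + 1) → T, ∀ i : Fin (m + 1), ∀ e ∈ E T,
        c (Function.update x i (e * x i)) =
          θ (r (((List.ofFn x).take (i : ℕ)).foldr (· * ·) e)) * c x) := by
  constructor
  · -- order-preserving → identity
    intro hmono x i e he
    set x' := Function.update x i (e * x i) with hx'
    have hle : ∀ j, nle (x' j) (x j) := by
      intro j
      by_cases hj : j = i
      · subst hj
        rw [hx', Function.update_self]
        show e * x j = e * x j * (e * x j)⁻¹ * x j
        have hr : e * x j * (e * x j)⁻¹ = e * (x j * (x j)⁻¹) := r_idem_mul he (x j)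
        rw [hr, mul_assoc, mul_assoc, ← mul_assoc (x j), InverseSemigroup.mul_inv_mul]
      · rw [hx', Function.update_of_ne hj]
        exact (InverseSemigroup.mul_inv_mul (x j)).symm
    have h1 : c x' = c x' * (c x')⁻¹ * c x := hmono x' x hle
    rw [hc x'] at h1
    rw [hx'] at h1 ⊢
    rw [lemA m x i e he] at h1
    rw [h1, hθmul _ (r_mem _) _ (r_mem _), mul_assoc, ← hc x, mul_assoc,
      ← mul_assoc (c x), InverseSemigroup.mul_inv_mul]
  · -- identity → order-preserving
    intro h x y hxy
    have hidem : ∀ i : Fin (m + 1), x i * (x i)⁻¹ ∈ E T := fun i => r_mem (x i)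
    have hxe : ∀ i, x i = x i * (x i)⁻¹ * y i := fun i => hxy i
    set z : ℕ → Fin (m + 1) → T := fun k i => if (i : ℕ) < k then x i else y i with hz
    have hz0 : z 0 = y := funext fun i => if_neg (Nat.not_lt_zero _)
    have hzlast : z (m + 1) = x := funext fun i => if_pos i.isLt
    have claim : ∀ k, k ≤ m + 1 → ∃ F ∈ E A, c (z k) = F * c y := by
      intro k
      induction k with
      | zero =>
        intro _
        refine ⟨θ (r (tupleProd y)), hθE _ (r_mem _), ?_⟩
        rw [hz0, ← hc y, mul_assoc, ← mul_assoc (c y), InverseSemigroup.mul_inv_mul]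
      | succ k ih =>
        intro hk
        obtain ⟨F, hF, hcF⟩ := ih (Nat.le_of_succ_le hk)
        set ik : Fin (m + 1) := ⟨k, hk⟩ with hik
        have hzik : z k ik = y ik := if_neg (lt_irrefl k)
        have hupd : Function.update (z k) ik (x ik * (x ik)⁻¹ * z k ik) = z (k + 1) := by
          funext j
          by_cases hj : j = ik
          · subst hj
            rw [Function.update_self, hzik, ← hxe ik]
            exact (if_pos (Nat.lt_succ_self k)).symm
          · rw [Function.update_of_ne hj]
            have hjk : (j : ℕ) ≠ k := fun hh => hj (Fin.ext hh)
            show (if (j : ℕ) < k then x j else y j) = (if (j : ℕ) < k + 1 then x j else y j)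
            rcases Nat.lt_or_ge (j : ℕ) k with hlt | hge
            · rw [if_pos hlt, if_pos (Nat.lt_succ_of_lt hlt)]
            · rw [if_neg (Nat.not_lt.mpr hge),
                if_neg (Nat.not_lt.mpr (Nat.lt_of_le_of_ne hge (Ne.symm hjk)))]
        have happ := h (z k) ik (x ik * (x ik)⁻¹) (hidem ik)
        rw [hupd] at happ
        refine ⟨θ (r (((List.ofFn (z k)).take (ik : ℕ)).foldr (· * ·)
          (x ik * (x ik)⁻¹))) * F, idem_mul_mem (hθE _ (r_mem _)) hF, ?_⟩
        rw [happ, hcF, mul_assoc]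
    obtain ⟨F, hF, hcx⟩ := claim (m + 1) le_rfl
    rw [hzlast] at hcx
    show c x = c x * (c x)⁻¹ * c y
    have hry : c y * (c y)⁻¹ ∈ E A := r_mem (c y)
    calc c x = F * c y := hcx
      _ = (F * F) * (c y * (c y)⁻¹ * c y) := by
          rw [mem_E_iff.mp hF, InverseSemigroup.mul_inv_mul]
      _ = F * (F * (c y * (c y)⁻¹)) * c y := by simp only [mul_assoc]
      _ = F * (c y * (c y)⁻¹ * F) * c y := by rw [idem_comm hF hry]
      _ = (F * c y) * ((c y)⁻¹ * F) * c y := by simp only [mul_assoc]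
      _ = (F * c y) * ((c y)⁻¹ * F⁻¹) * c y := by rw [idem_inv hF]
      _ = (F * c y) * (F * c y)⁻¹ * c y := by rw [isg_mul_inv_rev]
      _ = c x * (c x)⁻¹ * c y := by rw [← hcx]
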